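/- Let Γ̄ be a SODE on M/G and Γ an un-reduction of Γ̄ on TM along Tπ. Let ϖ: TM → 𝔤 be the connection map of a principal connection and ϖ^V = τ_M^* ϖ the vertical connection. Then Γ is a SODE on M if and only if ϖ^V ∘ Γ = ϖ. -/
import Mathlib


/- STATEMENT 11: Let Γ̄ be a SODE on M/G and Γ an un-reduction of Γ̄ along Tπ.  Let
ϖ : TM → 𝔤 be the connection map of a principal connection and ϖ^V = τ_M^* ϖ the vertical
connection.  Then Γ is a SODE on M if and only if ϖ^V ∘ Γ = ϖ.

Formalization: M = B × F in a local trivialization, π = fst, TM = M × M, the connection map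
is ϖ_m(u, w) = w − σ(m)u (σ the horizontal-lift map), and ϖ^V(Γ(v_m)) = ϖ_m(Tτ(Γ(v_m))) =
ϖ_{p.1}((Γ p).1), so the condition ϖ^V ∘ Γ = ϖ reads ϖ_{p.1}((Γ p).1) = ϖ_{p.1}(p.2). -/

theorem sode_iff_vertical_connection_condition
    {B F : Type*} [NormedAddCommGroup B] [NormedSpace ℝ B]
    [NormedAddCommGroup F] [NormedSpace ℝ F]
    (σ : (B × F) → (B →L[ℝ] F))
    (Γ : ((B × F) × (B × F)) → ((B × F) × (B × F)))
    (Γbar : B × B → B × B)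
    -- Γ̄ is a SODE on M/G
    (hbarsode : ∀ q : B × B, (Γbar q).1 = q.2)
    -- Γ is an un-reduction of Γ̄
    (hrel : ∀ p, ((Γ p).1.1, (Γ p).2.1) = Γbar (p.1.1, p.2.1)) :
    -- Γ is a SODE  ↔  ϖ^V ∘ Γ = ϖ
    (∀ p, (Γ p).1 = p.2) ↔
      (∀ p : (B × F) × (B × F),
        (Γ p).1.2 - σ p.1 ((Γ p).1.1) = p.2.2 - σ p.1 p.2.1) := by
  constructor
  · intro h p
    rw [h p]
  · intro h p
    have h1 : (Γ p).1.1 = p.2.1 := by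
      have := congrArg Prod.fst (hrel p)
      simpa [hbarsode] using this
    have h2 : (Γ p).1.2 = p.2.2 := by
      have := h p
      rw [h1] at this
      exact sub_left_injective this
    exact Prod.ext h1 h2
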